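/- Let z ∈ {±1}ⁿ and let C, Δ⁺ be symmetric n×n matrices with Δ⁺_{ij}·zᵢ·zⱼ ≥ 0 for all i,j. If z is a maximizer of x ↦ ⟨C, xxᵀ⟩ over x ∈ {±1}ⁿ, then z is also a maximizer of x ↦ ⟨C + Δ⁺, xxᵀ⟩ over x ∈ {±1}ⁿ. Moreover, if z is the unique maximizer up to global sign for C, it remains so for C + Δ⁺. -/
import Mathlib

lemma delta_term_le {n : ℕ} (z x : Fin n → ℝ)
    (hz : ∀ i, z i = 1 ∨ z i = -1) (hx : ∀ i, x i = 1 ∨ x i = -1)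
    (Δ : Matrix (Fin n) (Fin n) ℝ)
    (hmono : ∀ i j, Δ i j * z i * z j ≥ 0) (i j : Fin n) :
    Δ i j * (x i * x j) ≤ Δ i j * (z i * z j) := by
  have hzz : Δ i j * (z i * z j) = |Δ i j| := by
    have h := hmono i j
    have hz1 : |z i| = 1 := by rcases hz i with h | h <;> simp [h]
    have hz2 : |z j| = 1 := by rcases hz j with h | h <;> simp [h]
    have : Δ i j * (z i * z j) = |Δ i j * (z i * z j)| := by
      rw [abs_of_nonneg]; linarith [h]
    rw [this, abs_mul, abs_mul, hz1, hz2]; ring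
  have hx1 : |x i| = 1 := by rcases hx i with h | h <;> simp [h]
  have hx2 : |x j| = 1 := by rcases hx j with h | h <;> simp [h]
  calc Δ i j * (x i * x j) ≤ |Δ i j * (x i * x j)| := le_abs_self _
    _ = |Δ i j| := by rw [abs_mul, abs_mul, hx1, hx2]; ring
    _ = Δ i j * (z i * z j) := hzz.symm

lemma delta_sum_le {n : ℕ} (z x : Fin n → ℝ)
    (hz : ∀ i, z i = 1 ∨ z i = -1) (hx : ∀ i, x i = 1 ∨ x i = -1)
    (Δ : Matrix (Fin n) (Fin n) ℝ)
    (hmono : ∀ i j, Δ i j * z i * z j ≥ 0) :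
    (∑ i, ∑ j, Δ i j * (x i * x j)) ≤ ∑ i, ∑ j, Δ i j * (z i * z j) := by
  apply Finset.sum_le_sum; intro i _
  apply Finset.sum_le_sum; intro j _
  exact delta_term_le z x hz hx Δ hmono i j

lemma sum_split {n : ℕ} (x : Fin n → ℝ) (C Δ : Matrix (Fin n) (Fin n) ℝ) :
    (∑ i, ∑ j, (C + Δ) i j * (x i * x j)) =
      (∑ i, ∑ j, C i j * (x i * x j)) + ∑ i, ∑ j, Δ i j * (x i * x j) := by
  rw [← Finset.sum_add_distrib]
  apply Finset.sum_congr rfl; intro i _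
  rw [← Finset.sum_add_distrib]
  apply Finset.sum_congr rfl; intro j _
  simp [Matrix.add_apply]; ring

theorem monotone_adversary_robust {n : ℕ} (z : Fin n → ℝ)
    (hz : ∀ i, z i = 1 ∨ z i = -1)
    (C Δ : Matrix (Fin n) (Fin n) ℝ) (hC : C.IsSymm) (hΔ : Δ.IsSymm)
    (hmono : ∀ i j, Δ i j * z i * z j ≥ 0) :
    ((∀ x : Fin n → ℝ, (∀ i, x i = 1 ∨ x i = -1) →
        (∑ i, ∑ j, C i j * (x i * x j)) ≤ ∑ i, ∑ j, C i j * (z i * z j)) →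
      ∀ x : Fin n → ℝ, (∀ i, x i = 1 ∨ x i = -1) →
        (∑ i, ∑ j, (C + Δ) i j * (x i * x j)) ≤ ∑ i, ∑ j, (C + Δ) i j * (z i * z j)) ∧
    (((∀ x : Fin n → ℝ, (∀ i, x i = 1 ∨ x i = -1) →
          (∑ i, ∑ j, C i j * (x i * x j)) ≤ ∑ i, ∑ j, C i j * (z i * z j)) ∧
        (∀ x : Fin n → ℝ, (∀ i, x i = 1 ∨ x i = -1) →
          (∑ i, ∑ j, C i j * (x i * x j)) = (∑ i, ∑ j, C i j * (z i * z j)) →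
          x = z ∨ x = -z)) →
      (∀ x : Fin n → ℝ, (∀ i, x i = 1 ∨ x i = -1) →
        (∑ i, ∑ j, (C + Δ) i j * (x i * x j)) ≤ ∑ i, ∑ j, (C + Δ) i j * (z i * z j)) ∧
      (∀ x : Fin n → ℝ, (∀ i, x i = 1 ∨ x i = -1) →
        (∑ i, ∑ j, (C + Δ) i j * (x i * x j)) = (∑ i, ∑ j, (C + Δ) i j * (z i * z j)) →
        x = z ∨ x = -z)) := by
  have main : (∀ x : Fin n → ℝ, (∀ i, x i = 1 ∨ x i = -1) →
      (∑ i, ∑ j, C i j * (x i * x j)) ≤ ∑ i, ∑ j, C i j * (z i * z j)) →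
      ∀ x : Fin n → ℝ, (∀ i, x i = 1 ∨ x i = -1) →
        (∑ i, ∑ j, (C + Δ) i j * (x i * x j)) ≤ ∑ i, ∑ j, (C + Δ) i j * (z i * z j) := by
    intro hmax x hx
    rw [sum_split, sum_split]
    exact add_le_add (hmax x hx) (delta_sum_le z x hz hx Δ hmono)
  refine ⟨main, ?_⟩
  rintro ⟨hmax, huniq⟩
  refine ⟨main hmax, ?_⟩
  intro x hx heq
  rw [sum_split, sum_split] at heq
  have h1 := hmax x hx
  have h2 := delta_sum_le z x hz hx Δ hmono
  exact huniq x hx (by linarith)
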